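/- For the optimal CHSH_n quantum strategy on the EPR state, the winning probability on every valid input pair equals cos²(π/(4n)): if Alice measures the observable cos(aπ/n)σ_z + sin(aπ/n)σ_x on input a ∈ {0,…,n−2} and cos(−π/n)σ_z + sin(−π/n)σ_x on input n−1, and Bob measures cos((b−1/2)π/n)σ_z + sin((b−1/2)π/n)σ_x on input b, then for each valid (a,b) the probability of the CHSH_n winning condition is cos²(π/(4n)). -/
import Mathlib


open Matrix

noncomputable section

/-- Pauli σ_z. -/
def pauliZ : Matrix (Fin 2) (Fin 2) ℂ := !![1, 0; 0, -1]

/-- Pauli σ_x. -/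
def pauliX : Matrix (Fin 2) (Fin 2) ℂ := !![0, 1; 1, 0]

/-- The observable `cos θ σ_z + sin θ σ_x`. -/
def rotObs (θ : ℝ) : Matrix (Fin 2) (Fin 2) ℂ :=
  ((Real.cos θ : ℝ) : ℂ) • pauliZ + ((Real.sin θ : ℝ) : ℂ) • pauliX

/-- Spectral projection of a ±1-valued observable: eigenvalue `+1` corresponds to
outcome bit `false`, `−1` to outcome bit `true`. -/
def outcomeProj (M : Matrix (Fin 2) (Fin 2) ℂ) (x : Bool) :
    Matrix (Fin 2) (Fin 2) ℂ :=
  ((2 : ℂ))⁻¹ • (1 + (if x then (-1 : ℂ) else 1) • M)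

/-- The EPR state `(|00⟩ + |11⟩)/√2`. -/
def eprVec : Fin 2 × Fin 2 → ℂ :=
  fun p => if p.1 = p.2 then (((Real.sqrt 2)⁻¹ : ℝ) : ℂ) else 0

/-- Alice's measurement angle on input `a` in the optimal CHSH_n strategy. -/
def chshnAliceAngle (n : ℕ) (a : Fin n) : ℝ :=
  if a.val = n - 1 then -(Real.pi / n) else a.val * Real.pi / n

/-- Bob's measurement angle on input `b` in the optimal CHSH_n strategy. -/
def chshnBobAngle (n : ℕ) (b : Fin n) : ℝ :=
  (b.val - 1/2) * Real.pi / n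

/-- The probability (as a complex number) that the EPR strategy with the given
measurement angles yields outcomes `(x, y)` on inputs `(a, b)`. -/
def chshnOutcomeProb (n : ℕ) (a b : Fin n) (x y : Bool) : ℂ :=
  ∑ i : Fin 2 × Fin 2, (starRingEnd ℂ) (eprVec i) *
    ((Matrix.kronecker (outcomeProj (rotObs (chshnAliceAngle n a)) x)
      (outcomeProj (rotObs (chshnBobAngle n b)) y)).mulVec eprVec) i

end

lemma prob_formula (α β : ℝ) (x y : Bool) :
    (∑ i : Fin 2 × Fin 2, (starRingEnd ℂ) (eprVec i) *
      ((Matrix.kronecker (outcomeProj (rotObs α) x)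
        (outcomeProj (rotObs β) y)).mulVec eprVec) i)
    = ((4:ℂ))⁻¹ * (1 + (if x = y then 1 else -1) * ((Real.cos (α - β) : ℝ) : ℂ)) := by
  have h2 : ((Real.sqrt 2 : ℝ) : ℂ)⁻¹ * ((Real.sqrt 2 : ℝ) : ℂ)⁻¹ = 2⁻¹ := by
    rw [← mul_inv, ← Complex.ofReal_mul, Real.mul_self_sqrt (by norm_num : (0:ℝ) ≤ 2)]
    norm_num
  have hc : ((Real.cos (α - β) : ℝ) : ℂ) = Real.cos α * Real.cos β + Real.sin α * Real.sin β := by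
    rw [Real.cos_sub]; push_cast; ring
  cases x <;> cases y <;>
  · simp only [Fintype.sum_prod_type, Fin.sum_univ_two, eprVec, outcomeProj, rotObs, pauliZ,
      pauliX, Matrix.kronecker_apply, Matrix.mulVec, dotProduct, Matrix.smul_apply,
      Matrix.add_apply, Matrix.one_apply, Matrix.cons_val', Matrix.cons_val_zero,
      Matrix.cons_val_one, Matrix.head_cons, Matrix.head_fin_const, Matrix.empty_val',
      Matrix.cons_val_fin_one, if_true, if_false, Bool.false_eq_true, ite_true, ite_false,
      map_zero, Complex.conj_ofReal, smul_eq_mul]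
    norm_num [hc]
    ring_nf
    rw [show ((Real.sqrt 2:ℝ):ℂ)⁻¹ ^ 2 = 2⁻¹ by rw [sq]; exact h2]
    ring

lemma sum_same (c : ℂ) :
    (∑ x : Bool, ∑ y : Bool, (if x = y then
      ((4:ℂ))⁻¹ * (1 + (if x = y then 1 else -1) * c) else 0)) = 2⁻¹ * (1 + c) := by
  simp [Fintype.sum_bool]; ring

lemma sum_diff (c : ℂ) :
    (∑ x : Bool, ∑ y : Bool, (if x ≠ y then
      ((4:ℂ))⁻¹ * (1 + (if x = y then 1 else -1) * c) else 0)) = 2⁻¹ * (1 - c) := by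
  simp [Fintype.sum_bool]; ring

lemma half_cos (n : ℕ) (hn : 2 ≤ n) :
    (1 + Real.cos (Real.pi / (2 * n))) / 2 = (Real.cos (Real.pi / (4 * n)))^2 := by
  rw [Real.cos_sq]
  have : 2 * (Real.pi / (4 * n)) = Real.pi / (2 * n) := by
    have : (n:ℝ) ≠ 0 := by positivity
    field_simp; ring
  rw [this]; ring


/-- The optimal CHSH_n quantum strategy on the EPR state wins every valid
question pair `(a,b)` (i.e. `b = a` or `b = a+1`) with probability exactly
`cos²(π/(4n))`. -/
theorem chshn_quantum_value (n : ℕ) (hn : 2 ≤ n) [NeZero n]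
    (a b : Fin n) (hab : b = a ∨ b = a + 1) :
    (if a.val = n - 1 ∧ b.val = n - 1 then
      ∑ x : Bool, ∑ y : Bool, (if x ≠ y then chshnOutcomeProb n a b x y else 0)
    else
      ∑ x : Bool, ∑ y : Bool, (if x = y then chshnOutcomeProb n a b x y else 0))
    = (((Real.cos (Real.pi / (4 * n)))^2 : ℝ) : ℂ) := by

  have hnR : (n:ℝ) ≠ 0 := by positivity
  have hn1 : (1:ℕ) ≤ n := by omega
  simp only [chshnOutcomeProb, prob_formula]
  by_cases hA : a.val = n - 1 ∧ b.val = n - 1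
  · rw [if_pos hA, sum_diff]
    have hα : chshnAliceAngle n a = -(Real.pi / n) := by
      simp [chshnAliceAngle, hA.1]
    have hδ : chshnAliceAngle n a - chshnBobAngle n b = Real.pi / (2 * n) - Real.pi := by
      rw [hα]
      unfold chshnBobAngle
      rw [hA.2, Nat.cast_sub hn1]
      push_cast
      field_simp
      ring
    rw [hδ, Real.cos_sub_pi]
    rw [show (2:ℂ)⁻¹ * (1 - ((-Real.cos (Real.pi/(2*n)) : ℝ) : ℂ))
        = (((1 + Real.cos (Real.pi / (2*n)))/2 : ℝ) : ℂ) by push_cast; ring]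
    rw [half_cos n hn]
  · rw [if_neg hA, sum_same]
    have hδ : Real.cos (chshnAliceAngle n a - chshnBobAngle n b)
        = Real.cos (Real.pi / (2 * n)) := by
      rcases hab with h | rfl
      · -- b = a, and not both n-1 so a.val ≠ n-1
        have hb : b.val = a.val := by rw [h]
        have ha : a.val ≠ n - 1 := by intro hh; exact hA ⟨hh, by rw [hb, hh]⟩
        unfold chshnAliceAngle chshnBobAngle
        rw [if_neg ha, hb]
        congr 1
        field_simp
        ring
      · by_cases ha : a.val = n - 1
        · have hb : (a+1).val = 0 := by
            simp [Fin.add_def, ha, Nat.sub_add_cancel hn1]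
          unfold chshnAliceAngle chshnBobAngle
          rw [if_pos ha, hb]
          rw [show -(Real.pi / n) - ((0:ℕ) - 1/2) * Real.pi / n = -(Real.pi / (2*n)) by
            push_cast; field_simp; ring]
          rw [Real.cos_neg]
        · have hb : ((a+1 : Fin n)).val = a.val + 1 := by
            have : a.val + 1 < n := by omega
            simp [Fin.add_def, Nat.mod_eq_of_lt this]
          unfold chshnAliceAngle chshnBobAngle
          rw [if_neg ha, hb]
          rw [show (a.val : ℝ) * Real.pi / n - (((a.val+1:ℕ):ℝ) - 1/2) * Real.pi / n
              = -(Real.pi / (2*n)) by push_cast; field_simp; ring]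
          rw [Real.cos_neg]
    rw [hδ]
    rw [show (2:ℂ)⁻¹ * (1 + ((Real.cos (Real.pi/(2*n)) : ℝ) : ℂ))
        = (((1 + Real.cos (Real.pi / (2*n)))/2 : ℝ) : ℂ) by push_cast; ring]
    rw [half_cos n hn]
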